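/- Suppose N is a nonnegative-integer-valued random variable with mean c and p ∈ (0,1). If E[(1-p)^N] = (⌈c⌉ - c)(1-p)^{⌊c⌋} + (c - ⌊c⌋)(1-p)^{⌈c⌉} (i.e., N attains the minimum), and c is not an integer, then P(N = ⌊c⌋) = ⌈c⌉ - c and P(N = ⌈c⌉) = c - ⌊c⌋; if c is an integer, then P(N = c) = 1. -/
import Mathlib


open Finset

lemma mu_geom_lt (q : ℝ) (hq : 0 < q) (hq1 : q < 1) (k : ℕ) (hk : 2 ≤ k) :
    ∑ i ∈ range k, q ^ i < k := by
  have : ∑ i ∈ range k, q ^ i < ∑ i ∈ range k, (1 : ℝ) := by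
    refine Finset.sum_lt_sum (fun i _ => pow_le_one₀ hq.le hq1.le) ⟨1, ?_, ?_⟩
    · exact mem_range.mpr (by omega)
    · simpa using hq1
  simpa using this

lemma mu_geom_le (q : ℝ) (hq : 0 < q) (hq1 : q < 1) (k : ℕ) :
    ∑ i ∈ range k, q ^ i ≤ k := by
  have : ∑ i ∈ range k, q ^ i ≤ ∑ i ∈ range k, (1 : ℝ) :=
    Finset.sum_le_sum (fun i _ => pow_le_one₀ hq.le hq1.le)
  simpa using this

lemma mu_geom_gt (q : ℝ) (hq : 0 < q) (hq1 : q < 1) (k : ℕ) (hk : 1 ≤ k) :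
    (k : ℝ) * q ^ k < ∑ i ∈ range k, q ^ i := by
  have : ∑ i ∈ range k, q ^ k < ∑ i ∈ range k, q ^ i := by
    refine Finset.sum_lt_sum (fun i hi => pow_le_pow_of_le_one hq.le hq1.le (mem_range.mp hi).le)
      ⟨0, mem_range.mpr (by omega), ?_⟩
    simpa using pow_lt_one₀ hq.le hq1 (by omega)
  simpa [mul_comm] using this

lemma mu_geom_ge (q : ℝ) (hq : 0 < q) (hq1 : q < 1) (k : ℕ) :
    (k : ℝ) * q ^ k ≤ ∑ i ∈ range k, q ^ i := by
  have : ∑ i ∈ range k, q ^ k ≤ ∑ i ∈ range k, q ^ i :=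
    Finset.sum_le_sum (fun i hi => pow_le_pow_of_le_one hq.le hq1.le (mem_range.mp hi).le)
  simpa [mul_comm] using this

lemma mu_geom_id (q : ℝ) (k : ℕ) : 1 - q ^ k = (∑ i ∈ range k, q ^ i) * (1 - q) := by
  have := geom_sum_mul q k
  nlinarith [this]

lemma gap_nonneg (q : ℝ) (hq : 0 < q) (hq1 : q < 1) (m n : ℕ) :
    q ^ m + ((n : ℝ) - m) * (q ^ (m + 1) - q ^ m) ≤ q ^ n := by
  rcases le_or_gt n m with h | h
  · obtain ⟨k, rfl⟩ := Nat.exists_eq_add_of_le h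
    have hkq := mu_geom_ge q hq hq1 k
    have hid := mu_geom_id q k
    have hqn : (0:ℝ) < q ^ n := pow_pos hq n
    have key : q ^ k + (k : ℝ) * q ^ k * (1 - q) ≤ 1 := by nlinarith
    have : ((n : ℝ) - (n + k : ℕ)) = -(k : ℝ) := by push_cast; ring
    rw [this]
    have e1 : q ^ (n + k) = q ^ n * q ^ k := pow_add q n k
    have e2 : q ^ (n + k + 1) = q ^ n * q ^ k * q := by rw [pow_succ, e1]
    nlinarith
  · obtain ⟨k, rfl⟩ := Nat.exists_eq_add_of_le h.le
    have hkq := mu_geom_le q hq hq1 k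
    have hid := mu_geom_id q k
    have hqm : (0:ℝ) < q ^ m := pow_pos hq m
    have key : 1 - (k : ℝ) * (1 - q) ≤ q ^ k := by nlinarith
    have : ((m + k : ℕ) : ℝ) - m = (k : ℝ) := by push_cast; ring
    rw [this]
    have e1 : q ^ (m + k) = q ^ m * q ^ k := pow_add q m k
    have e2 : q ^ (m + 1) = q ^ m * q := pow_succ q m
    nlinarith

lemma gap_pos (q : ℝ) (hq : 0 < q) (hq1 : q < 1) (m n : ℕ)
    (h1 : n ≠ m) (h2 : n ≠ m + 1) :
    q ^ m + ((n : ℝ) - m) * (q ^ (m + 1) - q ^ m) < q ^ n := by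
  rcases lt_or_gt_of_ne h1 with h | h
  · obtain ⟨k, rfl⟩ := Nat.exists_eq_add_of_le h.le
    have hk : 1 ≤ k := by omega
    have hkq := mu_geom_gt q hq hq1 k hk
    have hid := mu_geom_id q k
    have hqn : (0:ℝ) < q ^ n := pow_pos hq n
    have key : q ^ k + (k : ℝ) * q ^ k * (1 - q) < 1 := by nlinarith
    have : ((n : ℝ) - (n + k : ℕ)) = -(k : ℝ) := by push_cast; ring
    rw [this]
    have e1 : q ^ (n + k) = q ^ n * q ^ k := pow_add q n k
    have e2 : q ^ (n + k + 1) = q ^ n * q ^ k * q := by rw [pow_succ, e1]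
    nlinarith
  · have h' : m + 2 ≤ n := by omega
    obtain ⟨k, rfl⟩ := Nat.exists_eq_add_of_le (le_of_lt h)
    have hk : 2 ≤ k := by omega
    have hkq := mu_geom_lt q hq hq1 k hk
    have hid := mu_geom_id q k
    have hqm : (0:ℝ) < q ^ m := pow_pos hq m
    have key : 1 - (k : ℝ) * (1 - q) < q ^ k := by nlinarith
    have : ((m + k : ℕ) : ℝ) - m = (k : ℝ) := by push_cast; ring
    rw [this]
    have e1 : q ^ (m + k) = q ^ m * q ^ k := pow_add q m k
    have e2 : q ^ (m + 1) = q ^ m * q := pow_succ q m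
    nlinarith

/-- Uniqueness of the minimizing distribution: if a pmf `f` on `ℕ` with mean `c` attains the
minimal exponential moment `(1-r)(1-p)^⌊c⌋ + r(1-p)^(⌊c⌋+1)` (with `r = c - ⌊c⌋`), then:
if `c` is not an integer, `f` is the two-point distribution on `{⌊c⌋, ⌈c⌉}` with
`P(N = ⌈c⌉) = c - ⌊c⌋`; and if `c` is an integer, `f` is the point mass at `c`. -/
theorem minimizer_unique
    (p c : ℝ) (hp : 0 < p) (hp1 : p < 1) (hc : 0 ≤ c)
    (f : ℕ → ℝ) (hf : ∀ n, 0 ≤ f n) (hsum : ∑' n : ℕ, f n = 1)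
    (hmean_summable : Summable (fun n : ℕ => (n : ℝ) * f n))
    (hmean : ∑' n : ℕ, (n : ℝ) * f n = c)
    (hmin : ∑' n : ℕ, f n * (1 - p) ^ n
      = (1 - (c - ⌊c⌋₊)) * (1 - p) ^ ⌊c⌋₊ + (c - ⌊c⌋₊) * (1 - p) ^ (⌊c⌋₊ + 1)) :
    ((⌊c⌋₊ : ℝ) ≠ c → f ⌊c⌋₊ = 1 - (c - ⌊c⌋₊) ∧ f (⌊c⌋₊ + 1) = c - ⌊c⌋₊) ∧
    ((⌊c⌋₊ : ℝ) = c → f ⌊c⌋₊ = 1) := by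
  set q : ℝ := 1 - p with hqdef
  have hq : 0 < q := by simp [hqdef]; linarith
  have hq1 : q < 1 := by simp [hqdef]; linarith
  set m : ℕ := ⌊c⌋₊ with hmdef
  set B : ℝ := q ^ (m + 1) - q ^ m with hBdef
  set D : ℕ → ℝ := fun n => q ^ n - (q ^ m + ((n : ℝ) - m) * B) with hDdef
  -- summabilities
  have hSf : Summable f := by
    by_contra h
    rw [tsum_eq_zero_of_not_summable h] at hsum
    norm_num at hsum
  have hSg : Summable (fun n => f n * q ^ n) := by
    refine hSf.of_nonneg_of_le (fun n => mul_nonneg (hf n) (pow_nonneg hq.le n)) (fun n => ?_)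
    have := pow_le_one₀ hq.le hq1.le (n := n)
    nlinarith [hf n]
  have hSh : Summable (fun n => f n * D n) := by
    have heq : (fun n => f n * D n)
        = fun n => (f n * q ^ n) - (q ^ m - (m : ℝ) * B) * f n - B * ((n : ℝ) * f n) := by
      funext n; simp only [hDdef]; ring
    rw [heq]
    exact (hSg.sub (hSf.mul_left _)).sub (hmean_summable.mul_left _)
  -- each term nonneg
  have hnonneg : ∀ n, 0 ≤ f n * D n := fun n =>
    mul_nonneg (hf n) (sub_nonneg.mpr (gap_nonneg q hq hq1 m n))
  -- total is zero
  have htot : ∑' n, f n * D n = 0 := by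
    have heq : (fun n => f n * D n)
        = fun n => (f n * q ^ n) - (q ^ m - (m : ℝ) * B) * f n - B * ((n : ℝ) * f n) := by
      funext n; simp only [hDdef]; ring
    rw [heq, Summable.tsum_sub (hSg.sub (hSf.mul_left _)) (hmean_summable.mul_left _),
      Summable.tsum_sub hSg (hSf.mul_left _), tsum_mul_left, tsum_mul_left, hsum, hmean, hmin]
    ring
  have hzero : ∀ n, f n * D n = 0 := fun n =>
    le_antisymm (by have := Summable.le_tsum hSh n (fun j _ => hnonneg j); linarith) (hnonneg n)
  have hsupp : ∀ n, n ≠ m → n ≠ m + 1 → f n = 0 := by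
    intro n h1 h2
    have hD : 0 < D n := sub_pos.mpr (gap_pos q hq hq1 m n h1 h2)
    rcases mul_eq_zero.mp (hzero n) with h | h
    · exact h
    · exact absurd h (ne_of_gt hD)
  have hout : ∀ n ∉ ({m, m + 1} : Finset ℕ), f n = 0 := by
    intro n hn
    simp only [Finset.mem_insert, Finset.mem_singleton] at hn
    exact hsupp n (fun h => hn (Or.inl h)) (fun h => hn (Or.inr h))
  have hout' : ∀ n ∉ ({m, m + 1} : Finset ℕ), (n : ℝ) * f n = 0 := fun n hn => by
    rw [hout n hn, mul_zero]
  have hmm : m ≠ m + 1 := by omega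
  have h1 : f m + f (m + 1) = 1 := by
    rw [← hsum, tsum_eq_sum hout, Finset.sum_pair hmm]
  have h2 : (m : ℝ) * f m + ((m : ℝ) + 1) * f (m + 1) = c := by
    rw [← hmean, tsum_eq_sum hout', Finset.sum_pair hmm]
    push_cast; ring
  have hfm1 : f (m + 1) = c - m := by nlinarith [h1, h2]
  have hfm : f m = 1 - (c - m) := by linarith
  refine ⟨fun _ => ⟨hfm, hfm1⟩, fun heq => ?_⟩
  rw [hfm, ← heq]; ring
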